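/- For any virtual knot diagram D with cut systems P and P', the components partition of the double cover is well defined up to the claimed parity structure: both φ(D,P) and φ(D,P') are 2-component virtual link diagrams (for any nonempty cut system), and their linking numbers are equal. -/

import Mathlib

open scoped Classical

/-- Cyclic strict betweenness on `ZMod N`. -/
def strictBtw {N : ℕ} (a b x : ZMod N) : Prop :=
  (x - a).val < (b - a).val ∧ x ≠ a

/-- `P` is a cut system of the virtual knot diagram with Gauss circle `ZMod N`
and chord endpoint set `E`: an alternate orientation exists, flipping exactly
at cut points and chord endpoints, the two endpoints of each chord being
oppositely labelled. -/
def IsCutSystem {N : ℕ} (chords : Finset (ZMod N × ZMod N))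
    (E P : Finset (ZMod N)) : Prop :=
  ∃ ε : ZMod N → ZMod 2,
    (∀ x : ZMod N, ε (x + 1) = ε x + (if x + 1 ∈ P then 1 else 0)
        + (if x + 1 ∈ E then 1 else 0)) ∧
    (∀ c ∈ chords, ε c.1 ≠ ε c.2)

/-- Successor in the double covering `φ(D,P)`: two copies (`false` = `D`,
`true` = the mirror copy `D*`) of the circle, crossing to the other copy
exactly when passing a cut point of `P`. -/
def coverSucc {N : ℕ} (P : Finset (ZMod N)) (x : ZMod N × Bool) :
    ZMod N × Bool :=
  if x.1 + 1 ∈ P then (x.1 + 1, !x.2) else (x.1 + 1, x.2)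

/-- Two positions of the double covering lie on the same component. -/
def SameComp {N : ℕ} (P : Finset (ZMod N)) (x y : ZMod N × Bool) : Prop :=
  ∃ k : ℕ, (coverSucc P)^[k] x = y ∨ (coverSucc P)^[k] y = x

/-- Twice the linking number of `φ(D,P)`: the sum of the signs of the classical
crossings of the `D`-copy and the mirror copy whose two strands lie on
different components. -/
noncomputable def lkTwice {N : ℕ} (chords : Finset (ZMod N × ZMod N))
    (sgn : ZMod N × ZMod N → ℤ) (P : Finset (ZMod N)) : ℤ :=
  (∑ c ∈ chords, if ¬ SameComp P (c.1, false) (c.2, false) then sgn c else 0)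
    + ∑ c ∈ chords, if ¬ SameComp P (c.1, true) (c.2, true) then sgn c else 0

namespace DCaux

variable {N : ℕ} [NeZero N]

/-- Number of cut points passed in `m` steps starting right after `a`. -/
noncomputable def cnt (P : Finset (ZMod N)) (a : ZMod N) (m : ℕ) : ℕ :=
  ((Finset.range m).filter (fun k => a + ((k + 1 : ℕ) : ZMod N) ∈ P)).card

lemma cnt_zero (P : Finset (ZMod N)) (a : ZMod N) : cnt P a 0 = 0 := by
  simp [cnt]

lemma cnt_succ (P : Finset (ZMod N)) (a : ZMod N) (m : ℕ) :
    cnt P a (m + 1) = cnt P a m + (if a + ((m + 1 : ℕ) : ZMod N) ∈ P then 1 else 0) := by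
  unfold cnt
  rw [Finset.range_add_one, Finset.filter_insert]
  split_ifs with h
  · rw [Finset.card_insert_of_notMem (by simp)]
  · simp

lemma cnt_add (P : Finset (ZMod N)) (a : ZMod N) (m n : ℕ) :
    cnt P a (m + n) = cnt P a m + cnt P (a + (m : ZMod N)) n := by
  induction n with
  | zero => simp [cnt_zero]
  | succ n ih =>
      rw [← add_assoc, cnt_succ, ih, cnt_succ, add_assoc]
      congr 2
      push_cast
      ring_nf

lemma cnt_full (P : Finset (ZMod N)) (a : ZMod N) : cnt P a N = P.card := by
  unfold cnt
  apply Finset.card_bij (fun k _ => a + ((k + 1 : ℕ) : ZMod N))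
  · intro k hk; exact (Finset.mem_filter.mp hk).2
  · intro k hk l hl h
    have hk' := Finset.mem_range.mp (Finset.mem_filter.mp hk).1
    have hl' := Finset.mem_range.mp (Finset.mem_filter.mp hl).1
    have h2 : (k : ZMod N) = (l : ZMod N) := by
      push_cast at h
      exact add_right_cancel (add_left_cancel h)
    have h3 := congrArg ZMod.val h2
    rw [ZMod.val_cast_of_lt hk', ZMod.val_cast_of_lt hl'] at h3
    exact h3
  · intro p hp
    have key : (((p - a - 1).val + 1 : ℕ) : ZMod N) = p - a := by
      push_cast
      rw [ZMod.natCast_val, ZMod.cast_id]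
      ring
    refine ⟨(p - a - 1).val, Finset.mem_filter.mpr ⟨Finset.mem_range.mpr (ZMod.val_lt _), ?_⟩, ?_⟩
    · rw [key]; simpa using hp
    · rw [key]; ring

lemma iter_eq (P : Finset (ZMod N)) (a : ZMod N) (s : Bool) (m : ℕ) :
    (coverSucc P)^[m] (a, s) = (a + (m : ZMod N), xor s (decide (Odd (cnt P a m)))) := by
  induction m with
  | zero => simp [cnt_zero]
  | succ m ih =>
      rw [Function.iterate_succ_apply', ih, coverSucc]
      have hpt : a + (m : ZMod N) + 1 = a + (((m + 1 : ℕ)) : ZMod N) := by push_cast; ring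
      have hodd : Odd (cnt P a m + 1) ↔ ¬ Odd (cnt P a m) := by
        rw [Nat.odd_add_one, Nat.not_odd_iff_even]
      have hd : decide (Odd (cnt P a m + 1)) = !decide (Odd (cnt P a m)) := by
        rw [← decide_not]; exact decide_eq_decide.mpr hodd
      by_cases h : a + (((m + 1 : ℕ)) : ZMod N) ∈ P
      · rw [if_pos (by simpa [hpt] using h)]
        simp only [cnt_succ, if_pos h, hd, Bool.xor_not, hpt]
      · have h' : a + ((m : ZMod N) + 1) ∉ P := by
          rw [show a + ((m : ZMod N) + 1) = a + (((m + 1 : ℕ)) : ZMod N) from by push_cast; ring]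
          exact h
        rw [if_neg (by simpa [hpt] using h)]
        simp [cnt_succ, if_neg h, if_neg h', hpt]

end DCaux

namespace DCaux
variable {N : ℕ} [NeZero N]

lemma odd_cnt_mod (P : Finset (ZMod N)) (hPeven : 2 ∣ P.card) (a : ZMod N) (k : ℕ) :
    Odd (cnt P a k) ↔ Odd (cnt P a (k % N)) := by
  conv_lhs => rw [← Nat.mod_add_div k N]
  generalize k / N = q
  induction q with
  | zero => simp
  | succ q ih =>
      have hev : Even P.card := even_iff_two_dvd.mpr hPeven
      rw [Nat.mul_succ, ← add_assoc, cnt_add, cnt_full, Nat.odd_add]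
      simpa [hev] using ih

lemma cnt_symm (P : Finset (ZMod N)) (hPeven : 2 ∣ P.card) (a b : ZMod N) :
    Odd (cnt P a ((b - a).val)) ↔ Odd (cnt P b ((a - b).val)) := by
  by_cases hab : a = b
  · subst hab; simp
  · have hx : (b - a) ≠ 0 := sub_ne_zero.mpr (Ne.symm hab)
    haveI : NeZero (b - a) := ⟨hx⟩
    have hval : (b - a).val + (a - b).val = N := by
      have h1 : a - b = -(b - a) := by ring
      rw [h1, ZMod.val_neg_of_ne_zero]
      have h2 : (b - a).val < N := ZMod.val_lt _
      have h3 : (b - a).val ≠ 0 := by simpa [ZMod.val_eq_zero] using hx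
      omega
    have hsplit : cnt P a ((b - a).val + (a - b).val)
        = cnt P a ((b - a).val) + cnt P b ((a - b).val) := by
      rw [cnt_add]
      congr 2
      rw [ZMod.natCast_val, ZMod.cast_id]; ring
    rw [hval, cnt_full] at hsplit
    have he : Even (cnt P a ((b - a).val) + cnt P b ((a - b).val)) := by
      rw [← hsplit]; exact even_iff_two_dvd.mpr hPeven
    rw [Nat.even_add] at he
    rw [← Nat.not_even_iff_odd, ← Nat.not_even_iff_odd]
    exact not_congr he

lemma sameComp_iff (P : Finset (ZMod N)) (hPeven : 2 ∣ P.card) (a b : ZMod N) (s t : Bool) :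
    SameComp P (a, s) (b, t) ↔ t = xor s (decide (Odd (cnt P a ((b - a).val)))) := by
  constructor
  · rintro ⟨k, h | h⟩
    · rw [iter_eq] at h
      have h1 : a + (k : ZMod N) = b := (Prod.ext_iff.mp h).1
      have h2 : xor s (decide (Odd (cnt P a k))) = t := (Prod.ext_iff.mp h).2
      have hk : (k : ZMod N) = b - a := by rw [← h1]; ring
      have hmod : k % N = (b - a).val := by rw [← hk, ZMod.val_natCast]
      rw [← h2, ← hmod, decide_eq_decide.mpr (odd_cnt_mod P hPeven a k)]
    · rw [iter_eq] at h
      have h1 : b + (k : ZMod N) = a := (Prod.ext_iff.mp h).1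
      have h2 : xor t (decide (Odd (cnt P b k))) = s := (Prod.ext_iff.mp h).2
      have hk : (k : ZMod N) = a - b := by rw [← h1]; ring
      have hmod : k % N = (a - b).val := by rw [← hk, ZMod.val_natCast]
      have hbk : decide (Odd (cnt P b k)) = decide (Odd (cnt P a ((b - a).val))) := by
        rw [decide_eq_decide, odd_cnt_mod P hPeven b k, hmod]
        exact cnt_symm P hPeven b a
      have hs : s = xor t (decide (Odd (cnt P a ((b - a).val)))) := by
        rw [← h2, hbk]
      rw [hs, Bool.xor_assoc, Bool.xor_self, Bool.xor_false]
  · intro ht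
    refine ⟨(b - a).val, Or.inl ?_⟩
    rw [iter_eq]
    have hpt : a + (((b - a).val : ℕ) : ZMod N) = b := by
      rw [ZMod.natCast_val, ZMod.cast_id]; ring
    rw [hpt, ← ht]

lemma two_comps (P : Finset (ZMod N)) (hPeven : 2 ∣ P.card) :
    ∃ x y : ZMod N × Bool, ¬ SameComp P x y ∧
      ∀ z : ZMod N × Bool, SameComp P z x ∨ SameComp P z y := by
  refine ⟨(0, false), (0, true), ?_, ?_⟩
  · rw [sameComp_iff P hPeven]
    simp [Nat.odd_iff, cnt_zero]
  · rintro ⟨a, s⟩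
    by_cases h : (xor s (decide (Odd (cnt P a ((0 - a).val))))) = false
    · left; rw [sameComp_iff P hPeven]; exact h.symm
    · right; rw [sameComp_iff P hPeven]
      simp only [Bool.not_eq_false] at h; exact h.symm

end DCaux

namespace DCaux
variable {N : ℕ} [NeZero N]

lemma cast_eq_one_iff_odd (n : ℕ) : ((n : ZMod 2) = 1) ↔ Odd n := by
  rw [show (1 : ZMod 2) = ((1 : ℕ) : ZMod 2) from rfl, ZMod.natCast_eq_natCast_iff,
    Nat.ModEq, Nat.odd_iff]

lemma eps_add {ε : ZMod N → ZMod 2} {P E : Finset (ZMod N)}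
    (hε : ∀ x : ZMod N, ε (x + 1) = ε x + (if x + 1 ∈ P then 1 else 0)
        + (if x + 1 ∈ E then 1 else 0)) (a : ZMod N) (m : ℕ) :
    ε (a + (m : ZMod N)) = ε a + (cnt P a m : ZMod 2) + (cnt E a m : ZMod 2) := by
  induction m with
  | zero => simp [cnt_zero]
  | succ m ih =>
      have hpt : a + (((m + 1 : ℕ)) : ZMod N) = a + (m : ZMod N) + 1 := by push_cast; ring
      rw [hpt, hε, ih, cnt_succ P a m, cnt_succ E a m]
      rw [← hpt]
      push_cast
      ring

lemma card_even_of_cut {chords : Finset (ZMod N × ZMod N)} {E P : Finset (ZMod N)}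
    (hdistinct : E.card = 2 * chords.card)
    (hcut : IsCutSystem chords E P) : 2 ∣ P.card := by
  obtain ⟨ε, hε, -⟩ := hcut
  have h := eps_add hε 0 N
  rw [ZMod.natCast_self, add_zero, cnt_full, cnt_full] at h
  have h2 : ((P.card : ZMod 2)) + (E.card : ZMod 2) = 0 := by
    rw [add_assoc] at h
    exact (left_eq_add.mp h)
  have hEz : ((E.card : ZMod 2)) = 0 := by
    rw [hdistinct]
    exact (ZMod.natCast_eq_zero_iff _ 2).mpr ⟨_, rfl⟩
  rw [hEz, add_zero] at h2
  exact (ZMod.natCast_eq_zero_iff _ _).mp h2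

lemma chord_parity {chords : Finset (ZMod N × ZMod N)} {E P : Finset (ZMod N)}
    (hcut : IsCutSystem chords E P) {c : ZMod N × ZMod N} (hc : c ∈ chords) :
    ((cnt P c.1 ((c.2 - c.1).val) : ZMod 2)) = 1 + (cnt E c.1 ((c.2 - c.1).val) : ZMod 2) := by
  obtain ⟨ε, hε, hch⟩ := hcut
  have h := eps_add hε c.1 ((c.2 - c.1).val)
  have hpt : c.1 + (((c.2 - c.1).val : ℕ) : ZMod N) = c.2 := by
    rw [ZMod.natCast_val, ZMod.cast_id]; ring
  rw [hpt] at h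
  have hne := hch c hc
  set p : ZMod 2 := (cnt P c.1 ((c.2 - c.1).val) : ZMod 2)
  set e : ZMod 2 := (cnt E c.1 ((c.2 - c.1).val) : ZMod 2)
  have hs : p + e ≠ 0 := by
    intro h0
    apply hne
    rw [h, add_assoc, h0, add_zero]
  have h1 : p + e = 1 := by
    have : ∀ x : ZMod 2, x ≠ 0 → x = 1 := by decide
    exact this _ hs
  have he2 : e + e = 0 := by
    have h2 : (2 : ZMod 2) = 0 := rfl
    rw [← two_mul, h2, zero_mul]
  calc p = p + (e + e) := by rw [he2, add_zero]
    _ = (p + e) + e := by ring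
    _ = 1 + e := by rw [h1]

lemma notSameComp_iff_odd (P : Finset (ZMod N)) (hPeven : 2 ∣ P.card)
    (a b : ZMod N) (s : Bool) :
    (¬ SameComp P (a, s) (b, s)) ↔ Odd (cnt P a ((b - a).val)) := by
  rw [sameComp_iff P hPeven]
  cases s <;> simp

end DCaux

open DCaux in
/-- For any virtual knot diagram `D` with (nonempty) cut systems `P` and `P'`,
both converted diagrams `φ(D,P)` and `φ(D,P')` are 2-component virtual link
diagrams, and their linking numbers coincide. -/
theorem doubleCover_two_components_and_linkingNumber_welldefined
    {N : ℕ} [NeZero N]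
    (chords : Finset (ZMod N × ZMod N)) (E P P' : Finset (ZMod N))
    (sgn : ZMod N × ZMod N → ℤ)
    (hE : E = chords.image Prod.fst ∪ chords.image Prod.snd)
    (hproper : ∀ c ∈ chords, c.1 ≠ c.2)
    (hdistinct : E.card = 2 * chords.card)
    (hPE : Disjoint P E) (hPE' : Disjoint P' E)
    (hP : P.Nonempty) (hP' : P'.Nonempty)
    (hcut : IsCutSystem chords E P) (hcut' : IsCutSystem chords E P') :
    (∃ x y : ZMod N × Bool, ¬ SameComp P x y ∧
      ∀ z : ZMod N × Bool, SameComp P z x ∨ SameComp P z y) ∧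
    (∃ x y : ZMod N × Bool, ¬ SameComp P' x y ∧
      ∀ z : ZMod N × Bool, SameComp P' z x ∨ SameComp P' z y) ∧
    (lkTwice chords sgn P : ℚ) / 2 = (lkTwice chords sgn P' : ℚ) / 2 := by

  have hPev : 2 ∣ P.card := card_even_of_cut hdistinct hcut
  have hPev' : 2 ∣ P'.card := card_even_of_cut hdistinct hcut'
  refine ⟨two_comps P hPev, two_comps P' hPev', ?_⟩
  have key : ∀ c ∈ chords, ∀ s : Bool,
      (¬ SameComp P (c.1, s) (c.2, s)) ↔ (¬ SameComp P' (c.1, s) (c.2, s)) := by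
    intro c hc s
    rw [notSameComp_iff_odd P hPev, notSameComp_iff_odd P' hPev']
    rw [← cast_eq_one_iff_odd, ← cast_eq_one_iff_odd, chord_parity hcut hc,
      chord_parity hcut' hc]
  have : lkTwice chords sgn P = lkTwice chords sgn P' := by
    unfold lkTwice
    congr 1 <;> apply Finset.sum_congr rfl <;> intro c hc
    · rw [if_congr (key c hc false) rfl rfl]
    · rw [if_congr (key c hc true) rfl rfl]
  rw [this]
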